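/- arXiv:1812.07909 — 5 statements merged into one kernel-verified Lean document; each statement's English description precedes it below -/
import Mathlib

section
/- Let P and Q be probability measures on a measurable space Ω and let f = dP/d(P+Q) be the Radon–Nikodym derivative of P with respect to P + Q. Then the discriminator D* = f minimizes the loss L(D) = ∫ (−log D) dP + ∫ (−log(1−D)) dQ over all measurable D : Ω → [0,1]; that is, for every measurable D : Ω → [0,1], L(f) ≤ L(D), with integrals valued in [0, ∞] under the conventions log 0 = −∞ and 0 · ∞ = 0. -/
open MeasureTheory ENNReal

noncomputable def negLog (x : ℝ≥0∞) : ℝ≥0∞ :=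
  if x = 0 then ∞ else ENNReal.ofReal (-Real.log x.toReal)

lemma negLog_measurable : Measurable negLog := by
  unfold negLog
  refine Measurable.ite (measurableSet_singleton 0) measurable_const ?_
  exact ENNReal.measurable_ofReal.comp
    ((Real.measurable_log.comp ENNReal.measurable_toReal).neg)

lemma negLog_one : negLog 1 = 0 := by simp [negLog]

lemma real_key {α δ : ℝ} (hα0 : 0 < α) (hα1 : α < 1) (hδ0 : 0 < δ) (hδ1 : δ < 1) :
    α * (-Real.log α) + (1-α) * (-Real.log (1-α))
      ≤ α * (-Real.log δ) + (1-α) * (-Real.log (1-δ)) := by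
  have h1 : Real.log (δ/α) ≤ δ/α - 1 := Real.log_le_sub_one_of_pos (by positivity)
  have h2 : Real.log ((1-δ)/(1-α)) ≤ (1-δ)/(1-α) - 1 :=
    Real.log_le_sub_one_of_pos (div_pos (by linarith) (by linarith))
  rw [Real.log_div hδ0.ne' hα0.ne'] at h1
  rw [Real.log_div (by linarith) (by linarith)] at h2
  have hA : α * (Real.log δ - Real.log α) ≤ δ - α := by
    have := mul_le_mul_of_nonneg_left h1 hα0.le
    have e1 : α * (δ/α - 1) = δ - α := by field_simp
    linarith [e1 ▸ this]
  have hB : (1-α) * (Real.log (1-δ) - Real.log (1-α)) ≤ (1-δ) - (1-α) := by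
    have h1α : (0:ℝ) < 1 - α := by linarith
    have := mul_le_mul_of_nonneg_left h2 h1α.le
    have e2 : (1-α) * ((1-δ)/(1-α) - 1) = (1-δ) - (1-α) := by field_simp
    linarith [e2 ▸ this]
  nlinarith [hA, hB]

lemma key (a d : ℝ≥0∞) (ha : a ≤ 1) (hd : d ≤ 1) :
    a * negLog a + (1-a) * negLog (1-a) ≤ a * negLog d + (1-a) * negLog (1-d) := by
  rcases eq_or_ne a 0 with ha0 | ha0
  · simp [ha0, negLog_one]
  rcases eq_or_ne a 1 with ha1 | ha1
  · simp [ha1, negLog_one]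
  rcases eq_or_ne d 0 with hd0 | hd0
  · have : a * negLog d = ∞ := by simp [hd0, negLog, ENNReal.mul_top ha0]
    simp [this]
  rcases eq_or_ne d 1 with hd1 | hd1
  · have h1a : (1:ℝ≥0∞) - a ≠ 0 := by
      simp only [ne_eq, tsub_eq_zero_iff_le, not_le]
      exact lt_of_le_of_ne ha ha1
    have : (1-a) * negLog (1-d) = ∞ := by
      simp [hd1, negLog, ENNReal.mul_top h1a]
    simp [this]
  -- now a,d ∈ (0,1)
  have haT : a ≠ ∞ := (lt_of_le_of_lt ha one_lt_top).ne
  have hdT : d ≠ ∞ := (lt_of_le_of_lt hd one_lt_top).ne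
  have hα0 : 0 < a.toReal := toReal_pos ha0 haT
  have hα1 : a.toReal < 1 := by
    rw [← ENNReal.toReal_one]
    exact (toReal_lt_toReal haT one_ne_top).mpr (lt_of_le_of_ne ha ha1)
  have hδ0 : 0 < d.toReal := toReal_pos hd0 hdT
  have hδ1 : d.toReal < 1 := by
    rw [← ENNReal.toReal_one]
    exact (toReal_lt_toReal hdT one_ne_top).mpr (lt_of_le_of_ne hd hd1)
  have h1a0 : (1:ℝ≥0∞) - a ≠ 0 := by
    simp only [ne_eq, tsub_eq_zero_iff_le, not_le]; exact lt_of_le_of_ne ha ha1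
  have h1d0 : (1:ℝ≥0∞) - d ≠ 0 := by
    simp only [ne_eq, tsub_eq_zero_iff_le, not_le]; exact lt_of_le_of_ne hd hd1
  have h1aT : (1:ℝ≥0∞) - a ≠ ∞ := by simp
  have h1dT : (1:ℝ≥0∞) - d ≠ ∞ := by simp
  have h1a : (1 - a).toReal = 1 - a.toReal := by
    rw [ENNReal.toReal_sub_of_le ha one_ne_top, ENNReal.toReal_one]
  have h1d : (1 - d).toReal = 1 - d.toReal := by
    rw [ENNReal.toReal_sub_of_le hd one_ne_top, ENNReal.toReal_one]
  rw [negLog, negLog, negLog, negLog, if_neg ha0, if_neg hd0, if_neg h1a0, if_neg h1d0,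
    h1a, h1d]
  set α := a.toReal with hαdef
  set δ := d.toReal with hδdef
  have ea : a = ENNReal.ofReal α := (ofReal_toReal haT).symm
  have e1a : 1 - a = ENNReal.ofReal (1 - α) := by rw [← h1a]; exact (ofReal_toReal h1aT).symm
  rw [e1a, ea]
  have l1 : 0 ≤ -Real.log α := neg_nonneg.mpr (Real.log_nonpos hα0.le hα1.le)
  have l2 : 0 ≤ -Real.log (1-α) :=
    neg_nonneg.mpr (Real.log_nonpos (by linarith) (by linarith))
  have l3 : 0 ≤ -Real.log δ := neg_nonneg.mpr (Real.log_nonpos hδ0.le hδ1.le)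
  have l4 : 0 ≤ -Real.log (1-δ) :=
    neg_nonneg.mpr (Real.log_nonpos (by linarith) (by linarith))
  rw [← ENNReal.ofReal_mul hα0.le, ← ENNReal.ofReal_mul hα0.le,
    ← ENNReal.ofReal_mul (by linarith : (0:ℝ) ≤ 1 - α),
    ← ENNReal.ofReal_mul (by linarith : (0:ℝ) ≤ 1 - α),
    ← ENNReal.ofReal_add (mul_nonneg hα0.le l1) (mul_nonneg (by linarith) l2),
    ← ENNReal.ofReal_add (mul_nonneg hα0.le l3) (mul_nonneg (by linarith) l4)]
  exact ENNReal.ofReal_le_ofReal (real_key hα0 hα1 hδ0 hδ1)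

/-- For probability measures `P`, `Q`, the discriminator `D* = dP/d(P+Q)` minimizes the
loss `L(D) = ∫ (-log D) dP + ∫ (-log (1-D)) dQ` over all measurable `D : Ω → [0,1]`. -/
theorem rnDeriv_minimizes_discriminator_loss
    {Ω : Type*} [MeasurableSpace Ω] (P Q : Measure Ω)
    [IsProbabilityMeasure P] [IsProbabilityMeasure Q]
    (D : Ω → ℝ≥0∞) (hD : Measurable D) (hD1 : ∀ x, D x ≤ 1) :
    ∫⁻ x, negLog (P.rnDeriv (P + Q) x) ∂P
        + ∫⁻ x, negLog (1 - P.rnDeriv (P + Q) x) ∂Q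
      ≤ ∫⁻ x, negLog (D x) ∂P + ∫⁻ x, negLog (1 - D x) ∂Q := by
  set μ := P + Q with hμ
  set f := P.rnDeriv μ with hfdef
  set g := Q.rnDeriv μ with hgdef
  have hPμ : P ≪ μ := Measure.absolutelyContinuous_of_le (Measure.le_add_right le_rfl)
  have hQμ : Q ≪ μ := Measure.absolutelyContinuous_of_le (Measure.le_add_left le_rfl)
  have hf : Measurable f := Measure.measurable_rnDeriv _ _
  have hg : Measurable g := Measure.measurable_rnDeriv _ _
  have hsum : f + g =ᵐ[μ] 1 := by
    have h1 := Measure.rnDeriv_add P Q μ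
    have h2 := Measure.rnDeriv_self μ
    exact (h1.symm.trans h2)
  have hae : ∀ᵐ x ∂μ, f x ≤ 1 ∧ g x = 1 - f x := by
    filter_upwards [hsum] with x hx
    have hx' : f x + g x = 1 := hx
    constructor
    · exact le_trans (le_add_right le_rfl) hx'.le
    · have hfx : f x ≠ ∞ := by
        intro h; rw [h, top_add] at hx'; exact absurd hx' (by simp)
      exact (ENNReal.sub_eq_of_eq_add hfx (by rw [← hx']; ring)).symm
  have hmlD : Measurable fun x => negLog (D x) := negLog_measurable.comp hD
  have hml1D : Measurable fun x => negLog (1 - D x) :=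
    negLog_measurable.comp (measurable_const.sub hD)
  have hmlf : Measurable fun x => negLog (f x) := negLog_measurable.comp hf
  have hml1f : Measurable fun x => negLog (1 - f x) :=
    negLog_measurable.comp (measurable_const.sub hf)
  have e1 : ∫⁻ x, negLog (f x) ∂P = ∫⁻ x, f x * negLog (f x) ∂μ :=
    (lintegral_rnDeriv_mul hPμ hmlf.aemeasurable).symm
  have e2 : ∫⁻ x, negLog (1 - f x) ∂Q = ∫⁻ x, g x * negLog (1 - f x) ∂μ :=
    (lintegral_rnDeriv_mul hQμ hml1f.aemeasurable).symm
  have e3 : ∫⁻ x, negLog (D x) ∂P = ∫⁻ x, f x * negLog (D x) ∂μ :=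
    (lintegral_rnDeriv_mul hPμ hmlD.aemeasurable).symm
  have e4 : ∫⁻ x, negLog (1 - D x) ∂Q = ∫⁻ x, g x * negLog (1 - D x) ∂μ :=
    (lintegral_rnDeriv_mul hQμ hml1D.aemeasurable).symm
  rw [e1, e2, e3, e4,
    ← lintegral_add_left (show Measurable fun x => f x * negLog (f x) from hf.mul hmlf),
    ← lintegral_add_left (show Measurable fun x => f x * negLog (D x) from hf.mul hmlD)]
  refine lintegral_mono_ae ?_
  filter_upwards [hae] with x ⟨hx1, hx2⟩
  rw [hx2]
  exact key (f x) (D x) hx1 (hD1 x)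
end

section
/- Let P and Q be probability measures on a measurable space Ω, let M = (1/2)(P + Q), and let f = dP/d(P+Q). Then ∫ (−log f) dP + ∫ (−log(1−f)) dQ = log 4 − KL(P‖M) − KL(Q‖M), where KL denotes Kullback–Leibler divergence; equivalently, the discriminator loss evaluated at the optimal discriminator f equals log 4 − 2 · D_JS(P‖Q), where D_JS(P‖Q) = (1/2) KL(P‖M) + (1/2) KL(Q‖M) is the Jensen–Shannon divergence. -/
open MeasureTheory ENNReal

/-- Kullback–Leibler divergence `KL(P‖M) = ∫ log (dP/dM) dP` (here `P ≪ M` and the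
divergence is finite, so a real-valued Bochner integral suffices). -/
noncomputable def klReal {Ω : Type*} [MeasurableSpace Ω] (P M : Measure Ω) : ℝ :=
  ∫ x, Real.log ((P.rnDeriv M x).toReal) ∂P

lemma aux_bound {a : ℝ≥0∞} (ha : a ≤ 1) :
    a * (‖Real.log a.toReal‖₊ : ℝ≥0∞) ≤ 1 := by
  have ha' : a ≠ ∞ := (ha.trans_lt one_lt_top).ne
  set t := a.toReal with ht
  have ht0 : 0 ≤ t := toReal_nonneg
  have ht1 : t ≤ 1 := by
    rw [ht, ← ENNReal.toReal_one]
    exact ENNReal.toReal_mono one_ne_top ha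
  rcases eq_or_lt_of_le ht0 with h0 | h0
  · have : a = 0 := by
      rw [← ENNReal.ofReal_toReal ha', ← ht, ← h0]; simp
    simp [this]
  · have hlogle : Real.log t ≤ 0 := Real.log_nonpos ht0 ht1
    have hkey : -Real.log t ≤ t⁻¹ - 1 := by
      have := Real.log_le_sub_one_of_pos (inv_pos.2 h0)
      rwa [Real.log_inv] at this
    have hnorm : ‖Real.log t‖ = -Real.log t := by
      rw [Real.norm_eq_abs, abs_of_nonpos hlogle]
    calc a * (‖Real.log t‖₊ : ℝ≥0∞)
        = ENNReal.ofReal t * ENNReal.ofReal (-Real.log t) := by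
          rw [← enorm_eq_nnnorm, ← ofReal_norm, hnorm, ← ENNReal.ofReal_toReal ha', ← ht]
      _ = ENNReal.ofReal (t * (-Real.log t)) := (ENNReal.ofReal_mul ht0).symm
      _ ≤ ENNReal.ofReal (t * (t⁻¹ - 1)) :=
          ENNReal.ofReal_le_ofReal (mul_le_mul_of_nonneg_left hkey ht0)
      _ ≤ 1 := by
          rw [mul_sub, mul_inv_cancel₀ h0.ne']
          refine ENNReal.ofReal_le_one.2 (by linarith)

lemma integrable_log_rnDeriv {Ω : Type*} [MeasurableSpace Ω]
    (μ ν : Measure Ω) [IsFiniteMeasure μ] [IsFiniteMeasure ν] (hle : μ ≤ ν) :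
    Integrable (fun x => Real.log ((μ.rnDeriv ν x)).toReal) μ := by
  have hμν : μ ≪ ν := hle.absolutelyContinuous
  have hmeas : Measurable fun x => Real.log ((μ.rnDeriv ν x)).toReal :=
    Real.measurable_log.comp (Measure.measurable_rnDeriv μ ν).ennreal_toReal
  refine ⟨hmeas.aestronglyMeasurable, ?_⟩
  rw [HasFiniteIntegral]; simp only [enorm_eq_nnnorm]
  have hm2 : AEMeasurable (fun x => (‖Real.log ((μ.rnDeriv ν x)).toReal‖₊ : ℝ≥0∞)) ν :=
    hmeas.nnnorm.coe_nnreal_ennreal.aemeasurable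
  rw [← lintegral_rnDeriv_mul hμν hm2]
  calc ∫⁻ x, μ.rnDeriv ν x * (‖Real.log ((μ.rnDeriv ν x)).toReal‖₊ : ℝ≥0∞) ∂ν
      ≤ ∫⁻ _, 1 ∂ν := by
        refine lintegral_mono_ae ?_
        filter_upwards [Measure.rnDeriv_le_one_of_le hle] with x hx
        exact aux_bound hx
    _ < ∞ := by simp [measure_lt_top ν]

lemma lintegral_negLog_rnDeriv {Ω : Type*} [MeasurableSpace Ω]
    (μ ν : Measure Ω) [IsFiniteMeasure μ] [IsFiniteMeasure ν] (hle : μ ≤ ν) :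
    ∫⁻ x, negLog (μ.rnDeriv ν x) ∂μ
      = ENNReal.ofReal (∫ x, -Real.log ((μ.rnDeriv ν x).toReal) ∂μ) := by
  have hμν : μ ≪ ν := hle.absolutelyContinuous
  have hpos : ∀ᵐ x ∂μ, 0 < μ.rnDeriv ν x := Measure.rnDeriv_pos hμν
  have hne : ∀ᵐ x ∂μ, μ.rnDeriv ν x ≠ ∞ := hμν.ae_le (Measure.rnDeriv_ne_top μ ν)
  have hle1 : ∀ᵐ x ∂μ, μ.rnDeriv ν x ≤ 1 := hμν.ae_le (Measure.rnDeriv_le_one_of_le hle)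
  have hnn : 0 ≤ᵐ[μ] fun x => -Real.log ((μ.rnDeriv ν x).toReal) := by
    filter_upwards [hle1] with x hx
    have : (μ.rnDeriv ν x).toReal ≤ 1 := by
      rw [← ENNReal.toReal_one]; exact ENNReal.toReal_mono one_ne_top hx
    simpa using Real.log_nonpos toReal_nonneg this
  have hint : Integrable (fun x => -Real.log ((μ.rnDeriv ν x).toReal)) μ :=
    (integrable_log_rnDeriv μ ν hle).neg'
  have h1 : ∫⁻ x, negLog (μ.rnDeriv ν x) ∂μ
      = ∫⁻ x, ENNReal.ofReal (-Real.log ((μ.rnDeriv ν x).toReal)) ∂μ := by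
    refine lintegral_congr_ae ?_
    filter_upwards [hpos] with x hx
    rw [negLog, if_neg hx.ne']
  rw [h1, ← MeasureTheory.ofReal_integral_eq_lintegral_ofReal hint hnn]

lemma klReal_half_smul {Ω : Type*} [MeasurableSpace Ω]
    (μ ν : Measure Ω) [IsProbabilityMeasure μ] [IsFiniteMeasure ν] (hle : μ ≤ ν) :
    klReal μ ((2 : ℝ≥0∞)⁻¹ • ν)
      = Real.log 2 + ∫ x, Real.log ((μ.rnDeriv ν x).toReal) ∂μ := by
  have hμν : μ ≪ ν := hle.absolutelyContinuous
  have hsmul : μ.rnDeriv ((2 : ℝ≥0∞)⁻¹ • ν) =ᵐ[ν] (2 : ℝ≥0∞)⁻¹⁻¹ • μ.rnDeriv ν :=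
    Measure.rnDeriv_smul_right_of_ne_top μ ν (by simp) (by simp)
  have hsmul' : ∀ᵐ x ∂μ, μ.rnDeriv ((2 : ℝ≥0∞)⁻¹ • ν) x = 2 * μ.rnDeriv ν x := by
    filter_upwards [hμν.ae_le hsmul] with x hx
    simpa using hx
  have hpos : ∀ᵐ x ∂μ, 0 < μ.rnDeriv ν x := Measure.rnDeriv_pos hμν
  have hne : ∀ᵐ x ∂μ, μ.rnDeriv ν x ≠ ∞ := hμν.ae_le (Measure.rnDeriv_ne_top μ ν)
  have hcongr : klReal μ ((2 : ℝ≥0∞)⁻¹ • ν)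
      = ∫ x, (Real.log 2 + Real.log ((μ.rnDeriv ν x).toReal)) ∂μ := by
    refine integral_congr_ae ?_
    filter_upwards [hsmul', hpos, hne] with x hx hx0 hxt
    have htne : (μ.rnDeriv ν x).toReal ≠ 0 := by
      simp [ENNReal.toReal_eq_zero_iff, hx0.ne', hxt]
    rw [hx, ENNReal.toReal_mul, Real.log_mul (by norm_num) htne]
    norm_num
  rw [hcongr, integral_add (integrable_const _) (integrable_log_rnDeriv μ ν hle)]
  simp

/-- For probability measures `P`, `Q` with midpoint `M = (1/2)(P+Q)` and
`f = dP/d(P+Q)`, the discriminator loss at the optimal discriminator `f` equals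
`log 4 - KL(P‖M) - KL(Q‖M)`; equivalently it equals `log 4 - 2·D_JS(P‖Q)` where
`D_JS(P‖Q) = (1/2) KL(P‖M) + (1/2) KL(Q‖M)` is the Jensen–Shannon divergence. -/
theorem optimal_discriminator_loss_eq_log_four_sub_two_js
    {Ω : Type*} [MeasurableSpace Ω] (P Q : Measure Ω)
    [IsProbabilityMeasure P] [IsProbabilityMeasure Q]
    (M : Measure Ω) (hM : M = (2 : ℝ≥0∞)⁻¹ • (P + Q)) :
    ∫⁻ x, negLog (P.rnDeriv (P + Q) x) ∂P
        + ∫⁻ x, negLog (1 - P.rnDeriv (P + Q) x) ∂Q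
      = ENNReal.ofReal (Real.log 4 - klReal P M - klReal Q M)
    ∧ ∫⁻ x, negLog (P.rnDeriv (P + Q) x) ∂P
        + ∫⁻ x, negLog (1 - P.rnDeriv (P + Q) x) ∂Q
      = ENNReal.ofReal
          (Real.log 4 - 2 * ((1 / 2) * klReal P M + (1 / 2) * klReal Q M)) := by
  subst hM
  set ν := P + Q with hν
  have hPle : P ≤ ν := Measure.le_add_right le_rfl
  have hQle : Q ≤ ν := by
    rw [hν]; exact Measure.le_add_left le_rfl
  have hPν : P ≪ ν := hPle.absolutelyContinuous
  have hQν : Q ≪ ν := hQle.absolutelyContinuous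
  -- 1 - f = g a.e.
  have hsum : P.rnDeriv ν + Q.rnDeriv ν =ᵐ[ν] 1 := by
    have h1 := Measure.rnDeriv_add' P Q ν
    have h2 := Measure.rnDeriv_self ν
    filter_upwards [h1, h2] with x hx1 hx2
    simp only [Pi.add_apply, Pi.one_apply] at hx1 hx2 ⊢
    rw [← hx1]
    exact hx2
  have hsub : ∀ᵐ x ∂ν, 1 - P.rnDeriv ν x = Q.rnDeriv ν x := by
    filter_upwards [hsum, Measure.rnDeriv_ne_top P ν] with x hx hxt
    simp only [Pi.add_apply, Pi.one_apply] at hx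
    rw [← hx]
    exact ENNReal.add_sub_cancel_left hxt
  have hQint : ∫⁻ x, negLog (1 - P.rnDeriv ν x) ∂Q
      = ENNReal.ofReal (∫ x, -Real.log ((Q.rnDeriv ν x).toReal) ∂Q) := by
    rw [← lintegral_negLog_rnDeriv Q ν hQle]
    refine lintegral_congr_ae ?_
    filter_upwards [hQν.ae_le hsub] with x hx
    rw [hx]
  have hPint : ∫⁻ x, negLog (P.rnDeriv ν x) ∂P
      = ENNReal.ofReal (∫ x, -Real.log ((P.rnDeriv ν x).toReal) ∂P) :=
    lintegral_negLog_rnDeriv P ν hPle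
  -- nonnegativity of the two integrals
  have hnnP : 0 ≤ ∫ x, -Real.log ((P.rnDeriv ν x).toReal) ∂P := by
    refine integral_nonneg_of_ae ?_
    filter_upwards [hPν.ae_le (Measure.rnDeriv_le_one_of_le hPle)] with x hx
    have : (P.rnDeriv ν x).toReal ≤ 1 := by
      rw [← ENNReal.toReal_one]; exact ENNReal.toReal_mono one_ne_top hx
    simpa using Real.log_nonpos toReal_nonneg this
  have hnnQ : 0 ≤ ∫ x, -Real.log ((Q.rnDeriv ν x).toReal) ∂Q := by
    refine integral_nonneg_of_ae ?_
    filter_upwards [hQν.ae_le (Measure.rnDeriv_le_one_of_le hQle)] with x hx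
    have : (Q.rnDeriv ν x).toReal ≤ 1 := by
      rw [← ENNReal.toReal_one]; exact ENNReal.toReal_mono one_ne_top hx
    simpa using Real.log_nonpos toReal_nonneg this
  have hKLP : klReal P ((2 : ℝ≥0∞)⁻¹ • ν)
      = Real.log 2 + ∫ x, Real.log ((P.rnDeriv ν x).toReal) ∂P :=
    klReal_half_smul P ν hPle
  have hKLQ : klReal Q ((2 : ℝ≥0∞)⁻¹ • ν)
      = Real.log 2 + ∫ x, Real.log ((Q.rnDeriv ν x).toReal) ∂Q :=
    klReal_half_smul Q ν hQle
  have hIP : ∫ x, -Real.log ((P.rnDeriv ν x).toReal) ∂P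
      = - ∫ x, Real.log ((P.rnDeriv ν x).toReal) ∂P := integral_neg _
  have hIQ : ∫ x, -Real.log ((Q.rnDeriv ν x).toReal) ∂Q
      = - ∫ x, Real.log ((Q.rnDeriv ν x).toReal) ∂Q := integral_neg _
  have hlog4 : Real.log 4 = Real.log 2 + Real.log 2 := by
    rw [show (4 : ℝ) = 2 * 2 by norm_num, Real.log_mul (by norm_num) (by norm_num)]
  have hmain : ∫⁻ x, negLog (P.rnDeriv ν x) ∂P + ∫⁻ x, negLog (1 - P.rnDeriv ν x) ∂Q
      = ENNReal.ofReal (Real.log 4 - klReal P ((2 : ℝ≥0∞)⁻¹ • ν)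
          - klReal Q ((2 : ℝ≥0∞)⁻¹ • ν)) := by
    rw [hPint, hQint, ← ENNReal.ofReal_add hnnP hnnQ]
    congr 1
    rw [hKLP, hKLQ, hlog4, hIP, hIQ]
    ring
  exact ⟨hmain, by rw [hmain]; congr 1; ring⟩
end

section
/- (Proposition 2, adversarial Z loss value.) Let μ be a Borel probability measure on ℝ^{d_Z}, let G : ℝ^{d_Z} → ℝ^{d_X} and E : ℝ^{d_X} → ℝ^{d_Z} be Borel measurable, let P = P_{Z,G(Z)} be the pushforward of μ under z ↦ (G(z), z) and Q = P_{E(G(Z)),G(Z)} the pushforward of μ under z ↦ (G(z), E(G(z))). Let D* = dP/d(P+Q). Then the loss at the optimal discriminator satisfies C(E,G) := ∫ (−log D*) dP + ∫ (−log(1−D*)) dQ = log 4 − 2 · D_JS(P‖Q), where D_JS(P‖Q) = (1/2) KL(P‖M) + (1/2) KL(Q‖M) with M = (1/2)(P + Q). -/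
open MeasureTheory ENNReal

lemma mul_negLog_le_one {x : ℝ≥0∞} (hx : x ≤ 1) : x * negLog x ≤ 1 := by
  rcases eq_or_ne x 0 with h | h
  · simp [h, negLog]
  · have hxt : x ≠ ∞ := (hx.trans_lt ENNReal.one_lt_top).ne
    have ht0 : 0 < x.toReal := ENNReal.toReal_pos h hxt
    have hreal : x.toReal * (-Real.log x.toReal) ≤ 1 := by
      have h1 := Real.log_le_sub_one_of_pos (inv_pos.mpr ht0)
      rw [Real.log_inv] at h1
      have h2 : -Real.log x.toReal ≤ x.toReal⁻¹ := by
        have : (0:ℝ) < x.toReal⁻¹ := inv_pos.mpr ht0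
        linarith
      calc x.toReal * (-Real.log x.toReal) ≤ x.toReal * x.toReal⁻¹ := by
            by_cases hlog : 0 ≤ -Real.log x.toReal
            · exact mul_le_mul_of_nonneg_left h2 ht0.le
            · nlinarith
        _ = 1 := mul_inv_cancel₀ ht0.ne'
    rw [negLog, if_neg h]
    calc x * ENNReal.ofReal (-Real.log x.toReal)
        = ENNReal.ofReal x.toReal * ENNReal.ofReal (-Real.log x.toReal) := by
          rw [ENNReal.ofReal_toReal hxt]
      _ = ENNReal.ofReal (x.toReal * (-Real.log x.toReal)) :=
          (ENNReal.ofReal_mul ENNReal.toReal_nonneg).symm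
      _ ≤ ENNReal.ofReal 1 := ENNReal.ofReal_le_ofReal hreal
      _ = 1 := ENNReal.ofReal_one

/-- Proposition 2 (adversarial Z loss value): with `P` the law of `(G(Z), Z)` and `Q` the
law of `(G(Z), E(G(Z)))` for `Z ∼ μ`, and `D* = dP/d(P+Q)`, the loss at the optimal
discriminator equals `log 4 - 2·D_JS(P‖Q)`, where
`D_JS(P‖Q) = (1/2) KL(P‖M) + (1/2) KL(Q‖M)` with `M = (1/2)(P+Q)`. -/
theorem adversarial_Z_optimal_loss_value
    (dZ dX : ℕ) (μ : Measure (EuclideanSpace ℝ (Fin dZ))) [IsProbabilityMeasure μ]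
    (G : EuclideanSpace ℝ (Fin dZ) → EuclideanSpace ℝ (Fin dX))
    (E : EuclideanSpace ℝ (Fin dX) → EuclideanSpace ℝ (Fin dZ))
    (hG : Measurable G) (hE : Measurable E)
    (P Q : Measure (EuclideanSpace ℝ (Fin dX) × EuclideanSpace ℝ (Fin dZ)))
    (hP : P = μ.map (fun z => (G z, z)))
    (hQ : Q = μ.map (fun z => (G z, E (G z))))
    (M : Measure (EuclideanSpace ℝ (Fin dX) × EuclideanSpace ℝ (Fin dZ)))
    (hM : M = (2 : ℝ≥0∞)⁻¹ • (P + Q)) :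
    ∫⁻ x, negLog (P.rnDeriv (P + Q) x) ∂P
        + ∫⁻ x, negLog (1 - P.rnDeriv (P + Q) x) ∂Q
      = ENNReal.ofReal
          (Real.log 4 - 2 * ((1 / 2) * klReal P M + (1 / 2) * klReal Q M)) := by
  haveI hPprob : IsProbabilityMeasure P := by
    rw [hP]; exact Measure.isProbabilityMeasure_map ((hG.prodMk measurable_id).aemeasurable)
  haveI hQprob : IsProbabilityMeasure Q := by
    rw [hQ]; exact Measure.isProbabilityMeasure_map ((hG.prodMk (hE.comp hG)).aemeasurable)
  clear hP hQ hG hE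
  set ν : Measure (EuclideanSpace ℝ (Fin dX) × EuclideanSpace ℝ (Fin dZ)) := P + Q with hν
  set D : (EuclideanSpace ℝ (Fin dX) × EuclideanSpace ℝ (Fin dZ)) → ℝ≥0∞ := P.rnDeriv ν
    with hDdef
  have hPν : P ≪ ν := Measure.absolutelyContinuous_of_le (Measure.le_add_right le_rfl)
  have hQν : Q ≪ ν := Measure.absolutelyContinuous_of_le (Measure.le_add_left le_rfl)
  haveI : IsFiniteMeasure ν := by rw [hν]; infer_instance
  haveI : SigmaFinite ν := inferInstance
  haveI : P.HaveLebesgueDecomposition ν := inferInstance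
  haveI : Q.HaveLebesgueDecomposition ν := inferInstance
  have hD_meas : Measurable D := Measure.measurable_rnDeriv P ν
  have hD_le : D ≤ᵐ[ν] 1 :=
    Measure.rnDeriv_le_one_of_le (Measure.le_add_right le_rfl)
  -- Q's density w.r.t. ν is 1 - D
  have hQD : Q.rnDeriv ν =ᵐ[ν] fun x => 1 - D x := by
    have h1 : ν.rnDeriv ν =ᵐ[ν] 1 := Measure.rnDeriv_self ν
    have h2 : (P + Q).rnDeriv ν =ᵐ[ν] P.rnDeriv ν + Q.rnDeriv ν :=
      Measure.rnDeriv_add' P Q ν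
    filter_upwards [h1, h2, hD_le] with x hx1 hx2 hx3
    have hsum : D x + Q.rnDeriv ν x = 1 := by
      have h1' : (P + Q).rnDeriv ν x = 1 := by simpa using hx1
      rw [← h1', hx2]; rfl
    have hDne : D x ≠ ∞ := (lt_of_le_of_lt (by simpa using hx3) ENNReal.one_lt_top).ne
    exact (ENNReal.sub_eq_of_eq_add hDne (by rw [add_comm, hsum])).symm
  have hQ_eq : ∀ᵐ x ∂Q, Q.rnDeriv ν x = 1 - D x := hQν.ae_le hQD
  have hP_pos : ∀ᵐ x ∂P, 0 < D x := Measure.rnDeriv_pos hPν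
  have hP_le : ∀ᵐ x ∂P, D x ≤ 1 := hPν.ae_le hD_le
  have hQ_pos : ∀ᵐ x ∂Q, 0 < 1 - D x := by
    filter_upwards [hQ_eq, Measure.rnDeriv_pos hQν] with x h1 h2
    rwa [h1] at h2
  have hsub_meas : Measurable fun x => 1 - D x := measurable_const.sub hD_meas
  -- Finiteness of the two lintegrals
  have hνuniv : ν Set.univ < ∞ := measure_lt_top ν _
  have hA_fin : ∫⁻ x, negLog (D x) ∂P ≠ ∞ := by
    rw [← lintegral_rnDeriv_mul hPν (f := fun x => negLog (D x))
      ((negLog_measurable.comp hD_meas).aemeasurable)]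
    have hb : ∫⁻ x, D x * negLog (D x) ∂ν ≤ ∫⁻ _, 1 ∂ν := by
      refine lintegral_mono_ae ?_
      filter_upwards [hD_le] with x hx
      exact mul_negLog_le_one (by simpa using hx)
    exact (hb.trans_lt (by rw [lintegral_one]; exact hνuniv)).ne
  have hB_fin : ∫⁻ x, negLog (1 - D x) ∂Q ≠ ∞ := by
    rw [← lintegral_rnDeriv_mul hQν (f := fun x => negLog (1 - D x))
      ((negLog_measurable.comp hsub_meas).aemeasurable)]
    have hb : ∫⁻ x, Q.rnDeriv ν x * negLog (1 - D x) ∂ν ≤ ∫⁻ _, 1 ∂ν := by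
      refine lintegral_mono_ae ?_
      filter_upwards [hQD] with x hx
      rw [hx]
      exact mul_negLog_le_one tsub_le_self
    exact (hb.trans_lt (by rw [lintegral_one]; exact hνuniv)).ne
  -- real-valued integrands
  set f : (EuclideanSpace ℝ (Fin dX) × EuclideanSpace ℝ (Fin dZ)) → ℝ :=
    fun x => -Real.log ((D x).toReal) with hfdef
  set g : (EuclideanSpace ℝ (Fin dX) × EuclideanSpace ℝ (Fin dZ)) → ℝ :=
    fun x => -Real.log ((1 - D x).toReal) with hgdef
  have hf_meas : Measurable f := (Real.measurable_log.comp hD_meas.ennreal_toReal).neg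
  have hg_meas : Measurable g := (Real.measurable_log.comp hsub_meas.ennreal_toReal).neg
  have hf_nn : 0 ≤ᵐ[P] f := by
    filter_upwards [hP_pos, hP_le] with x h1 h2
    have : Real.log ((D x).toReal) ≤ 0 :=
      Real.log_nonpos ENNReal.toReal_nonneg (ENNReal.toReal_le_of_le_ofReal one_pos.le
        (by simpa using h2))
    simpa [hfdef] using this
  have hg_nn : 0 ≤ᵐ[Q] g := by
    filter_upwards [hQ_pos] with x h1
    have : Real.log ((1 - D x).toReal) ≤ 0 :=
      Real.log_nonpos ENNReal.toReal_nonneg (ENNReal.toReal_le_of_le_ofReal one_pos.le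
        (by simpa using (tsub_le_self : 1 - D x ≤ 1)))
    simpa [hgdef] using this
  have hfP_ae : ∀ᵐ x ∂P, ENNReal.ofReal (f x) = negLog (D x) := by
    filter_upwards [hP_pos] with x h1
    rw [negLog, if_neg h1.ne']
  have hgQ_ae : ∀ᵐ x ∂Q, ENNReal.ofReal (g x) = negLog (1 - D x) := by
    filter_upwards [hQ_pos] with x h1
    rw [negLog, if_neg h1.ne']
  have hf_int : Integrable f P := by
    refine ⟨hf_meas.aestronglyMeasurable, ?_⟩
    rw [hasFiniteIntegral_iff_norm]
    have : ∫⁻ x, ENNReal.ofReal ‖f x‖ ∂P = ∫⁻ x, negLog (D x) ∂P := by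
      refine lintegral_congr_ae ?_
      filter_upwards [hf_nn, hfP_ae] with x h1 h2
      rw [Real.norm_of_nonneg h1, h2]
    rw [this]
    exact hA_fin.lt_top
  have hg_int : Integrable g Q := by
    refine ⟨hg_meas.aestronglyMeasurable, ?_⟩
    rw [hasFiniteIntegral_iff_norm]
    have : ∫⁻ x, ENNReal.ofReal ‖g x‖ ∂Q = ∫⁻ x, negLog (1 - D x) ∂Q := by
      refine lintegral_congr_ae ?_
      filter_upwards [hg_nn, hgQ_ae] with x h1 h2
      rw [Real.norm_of_nonneg h1, h2]
    rw [this]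
    exact hB_fin.lt_top
  set A : ℝ := ∫ x, f x ∂P with hAdef
  set B : ℝ := ∫ x, g x ∂Q with hBdef
  have hA_nn : 0 ≤ A := integral_nonneg_of_ae hf_nn
  have hB_nn : 0 ≤ B := integral_nonneg_of_ae hg_nn
  have hLA : ∫⁻ x, negLog (D x) ∂P = ENNReal.ofReal A := by
    rw [hAdef, ofReal_integral_eq_lintegral_ofReal hf_int hf_nn]
    exact (lintegral_congr_ae hfP_ae).symm
  have hLB : ∫⁻ x, negLog (1 - D x) ∂Q = ENNReal.ofReal B := by
    rw [hBdef, ofReal_integral_eq_lintegral_ofReal hg_int hg_nn]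
    exact (lintegral_congr_ae hgQ_ae).symm
  -- Compute the KL divergences
  have hPM : P.rnDeriv M =ᵐ[ν] fun x => 2 * D x := by
    have h := Measure.rnDeriv_smul_right_of_ne_top P ν
      (r := (2:ℝ≥0∞)⁻¹) (by simp) (by simp)
    rw [hM]
    filter_upwards [h] with x hx
    simpa using hx
  have hQM : Q.rnDeriv M =ᵐ[ν] fun x => 2 * (1 - D x) := by
    have h := Measure.rnDeriv_smul_right_of_ne_top Q ν
      (r := (2:ℝ≥0∞)⁻¹) (by simp) (by simp)
    rw [hM]
    filter_upwards [h, hQD] with x hx hx2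
    simpa [hx2] using hx
  have hklP : klReal P M = Real.log 2 - A := by
    have hcongr : ∀ᵐ x ∂P, Real.log ((P.rnDeriv M x).toReal)
        = Real.log 2 + Real.log ((D x).toReal) := by
      filter_upwards [hPν.ae_le hPM, hP_pos, hP_le] with x h1 h2 h3
      have hDne : D x ≠ ∞ := (lt_of_le_of_lt h3 ENNReal.one_lt_top).ne
      have ht0 : (D x).toReal ≠ 0 := (ENNReal.toReal_pos h2.ne' hDne).ne'
      rw [h1, ENNReal.toReal_mul, Real.log_mul (by norm_num) ht0]
      norm_num
    have hlogD_eq : (fun x => Real.log ((D x).toReal)) = fun x => -f x := by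
      funext x; simp [hfdef]
    have hlogD_int : Integrable (fun x => Real.log ((D x).toReal)) P := by
      rw [hlogD_eq]; exact hf_int.neg
    rw [klReal, integral_congr_ae hcongr,
      integral_add (integrable_const _) hlogD_int, integral_const, probReal_univ,
      hlogD_eq, integral_neg, one_smul, ← hAdef]
    ring
  have hklQ : klReal Q M = Real.log 2 - B := by
    have hcongr : ∀ᵐ x ∂Q, Real.log ((Q.rnDeriv M x).toReal)
        = Real.log 2 + Real.log ((1 - D x).toReal) := by
      filter_upwards [hQν.ae_le hQM, hQ_pos] with x h1 h2
      have hDne : (1 - D x) ≠ ∞ :=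
        (lt_of_le_of_lt (tsub_le_self : 1 - D x ≤ 1) ENNReal.one_lt_top).ne
      have ht0 : (1 - D x).toReal ≠ 0 := (ENNReal.toReal_pos h2.ne' hDne).ne'
      rw [h1, ENNReal.toReal_mul, Real.log_mul (by norm_num) ht0]
      norm_num
    have hlogQ_eq : (fun x => Real.log ((1 - D x).toReal)) = fun x => -g x := by
      funext x; simp [hgdef]
    have hlogQ_int : Integrable (fun x => Real.log ((1 - D x).toReal)) Q := by
      rw [hlogQ_eq]; exact hg_int.neg
    rw [klReal, integral_congr_ae hcongr,
      integral_add (integrable_const _) hlogQ_int, integral_const, probReal_univ,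
      hlogQ_eq, integral_neg, one_smul, ← hBdef]
    ring
  -- conclude
  rw [hLA, hLB, ← ENNReal.ofReal_add hA_nn hB_nn]
  congr 1
  have hlog4 : Real.log 4 = 2 * Real.log 2 := by
    rw [show (4:ℝ) = 2^2 by norm_num, Real.log_pow]
    norm_num
  rw [hklP, hklQ, hlog4]
  ring
end

section
/- (Theorem 1, adversarial Z loss fixed point.) Let μ be a Borel probability measure on ℝ^{d_Z}, and let G : ℝ^{d_Z} → ℝ^{d_X} and E : ℝ^{d_X} → ℝ^{d_Z} be Borel measurable. If the pushforward of μ under z ↦ (G(z), z) equals the pushforward of μ under z ↦ (G(z), E(G(z))) as measures on ℝ^{d_X} × ℝ^{d_Z}, then E(G(z)) = z for μ-almost every z; that is, E ∘ G = id_{ℝ^{d_Z}} μ-almost everywhere. -/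
open MeasureTheory

/-- Theorem 1 (adversarial Z loss fixed point): if the law of `(G(Z), Z)` equals the law
of `(G(Z), E(G(Z)))` for `Z ∼ μ`, then `E ∘ G = id` `μ`-almost everywhere. -/
theorem adversarial_Z_fixed_point
    (dZ dX : ℕ) (μ : Measure (EuclideanSpace ℝ (Fin dZ))) [IsProbabilityMeasure μ]
    (G : EuclideanSpace ℝ (Fin dZ) → EuclideanSpace ℝ (Fin dX))
    (E : EuclideanSpace ℝ (Fin dX) → EuclideanSpace ℝ (Fin dZ))
    (hG : Measurable G) (hE : Measurable E)
    (h : μ.map (fun z => (G z, z)) = μ.map (fun z => (G z, E (G z)))) :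
    ∀ᵐ z ∂μ, E (G z) = z := by
  set S : Set (EuclideanSpace ℝ (Fin dX) × EuclideanSpace ℝ (Fin dZ)) :=
    {p | E p.1 = p.2} with hS
  have hSm : MeasurableSet S :=
    measurableSet_eq_fun (hE.comp measurable_fst) measurable_snd
  have h1 : Measurable fun z => (G z, z) := hG.prodMk measurable_id
  have h2 : Measurable fun z => (G z, E (G z)) := hG.prodMk (hE.comp hG)
  have key : μ ((fun z => (G z, z)) ⁻¹' S) = μ ((fun z => (G z, E (G z))) ⁻¹' S) := by
    rw [← Measure.map_apply h1 hSm, ← Measure.map_apply h2 hSm, h]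
  have hpre2 : (fun z => (G z, E (G z))) ⁻¹' S = Set.univ := by
    ext z; simp [hS]
  have hfull : μ {z | E (G z) = z} = 1 := by
    have : (fun z => (G z, z)) ⁻¹' S = {z | E (G z) = z} := rfl
    rw [← this, key, hpre2, measure_univ]
  rw [ae_iff]
  have hcm : MeasurableSet {z | E (G z) = z} :=
    measurableSet_eq_fun (hE.comp hG) measurable_id
  have := measure_compl hcm (measure_ne_top μ _)
  simpa [hfull, Set.compl_setOf] using this
end

section
/- (Theorem 2, adversarial X loss fixed point.) Let μ be a Borel probability measure on ℝ^{d_Z}, and let G : ℝ^{d_Z} → ℝ^{d_X} and E : ℝ^{d_X} → ℝ^{d_Z} be Borel measurable. If the pushforward of μ under z ↦ (z, G(z)) equals the pushforward of μ under z ↦ (z, G(E(G(z)))) as measures on ℝ^{d_Z} × ℝ^{d_X}, then G(E(G(z))) = G(z) for μ-almost every z; equivalently, G(E(x)) = x for almost every x with respect to the pushforward measure P_G = G_*μ, i.e. G ∘ E = id_{ℝ^{d_X}} P_G-almost everywhere. -/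
open MeasureTheory

/-- Theorem 2 (adversarial X loss fixed point): if the law of `(Z, G(Z))` equals the law
of `(Z, G(E(G(Z))))` for `Z ∼ μ`, then `G(E(G(z))) = G(z)` for `μ`-a.e. `z`; equivalently,
`G ∘ E = id` almost everywhere with respect to the model distribution `P_G = G_* μ`. -/
theorem adversarial_X_fixed_point
    (dZ dX : ℕ) (μ : Measure (EuclideanSpace ℝ (Fin dZ))) [IsProbabilityMeasure μ]
    (G : EuclideanSpace ℝ (Fin dZ) → EuclideanSpace ℝ (Fin dX))
    (E : EuclideanSpace ℝ (Fin dX) → EuclideanSpace ℝ (Fin dZ))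
    (hG : Measurable G) (hE : Measurable E)
    (h : μ.map (fun z => (z, G z)) = μ.map (fun z => (z, G (E (G z))))) :
    (∀ᵐ z ∂μ, G (E (G z)) = G z) ∧ ∀ᵐ x ∂(μ.map G), G (E x) = x := by
  have hS : MeasurableSet {p : EuclideanSpace ℝ (Fin dZ) × EuclideanSpace ℝ (Fin dX) |
      p.2 = G p.1} := measurableSet_eq_fun measurable_snd (hG.comp measurable_fst)
  have h1 : μ.map (fun z => (z, G z)) {p | p.2 = G p.1} = 1 := by
    rw [Measure.map_apply (by fun_prop : Measurable fun z => (z, G z)) hS]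
    simp
  rw [h, Measure.map_apply (by fun_prop : Measurable fun z => (z, G (E (G z)))) hS] at h1
  have ha : ∀ᵐ z ∂μ, G (E (G z)) = G z := by
    rw [ae_iff]
    have hm : MeasurableSet {z | G (E (G z)) = G z} :=
      measurableSet_eq_fun ((hG.comp hE).comp hG) hG
    have : μ {z | G (E (G z)) = G z}ᶜ = 0 := by
      rw [measure_compl hm (measure_ne_top μ _)]
      have : μ {z | G (E (G z)) = G z} = 1 := by simpa using h1
      simp [this]
    simpa [Set.compl_setOf] using this
  refine ⟨ha, ?_⟩
  rw [ae_map_iff hG.aemeasurable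
    (measurableSet_eq_fun (hG.comp hE) measurable_id : MeasurableSet {x | G (E x) = x})]
  exact ha
end
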